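/- arXiv:0705.3629 — 2 statements merged into one kernel-verified Lean document; each statement's English description precedes it below -/
import Mathlib

section
/- Let f : ℝ → ℝ be convex and continuously differentiable, and let B, X be n×n Hermitian complex matrices. Then Tr f(B+X) − Tr f(B) − Tr(X · f′(B)) ≥ 0, where f′ is the derivative of f. -/
/-- `g` applied to a Hermitian matrix through a spectral decomposition
(continuous functional calculus): `g(B) = U · diag(g(λᵢ)) · U*`. -/
noncomputable def IsHermitian.applyFun {n : ℕ} {B : Matrix (Fin n) (Fin n) ℂ}
    (hB : B.IsHermitian) (g : ℝ → ℝ) : Matrix (Fin n) (Fin n) ℂ :=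
  (hB.eigenvectorUnitary : Matrix (Fin n) (Fin n) ℂ) *
    Matrix.diagonal (fun i => (g (hB.eigenvalues i) : ℂ)) *
    star (hB.eigenvectorUnitary : Matrix (Fin n) (Fin n) ℂ)

open Matrix Finset in
/-- Gradient inequality for convex differentiable functions. -/
lemma my_grad_ineq {f : ℝ → ℝ} (hconv : ConvexOn ℝ Set.univ f)
    (hd : Differentiable ℝ f) (x y : ℝ) :
    deriv f y * (x - y) ≤ f x - f y := by
  rcases lt_trichotomy x y with h | rfl | h
  · have h1 := hconv.slope_le_deriv (Set.mem_univ x) (Set.mem_univ y) h (hd y)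
    rw [slope_def_field] at h1
    have h' : 0 < y - x := by linarith
    nlinarith [(div_le_iff₀ h').mp h1]
  · simp
  · have h1 := hconv.deriv_le_slope (Set.mem_univ y) (Set.mem_univ x) h (hd y)
    rw [slope_def_field] at h1
    have h' : 0 < x - y := by linarith
    nlinarith [(le_div_iff₀ h').mp h1]

open Matrix Finset in
/-- `Tr (A · g(B)) = ∑ᵢⱼ λᵢ(A) g(λⱼ(B)) ‖(V* U)ⱼᵢ‖²`. -/
lemma my_trace_applyFun_re {n : ℕ} {A B : Matrix (Fin n) (Fin n) ℂ}
    (hA : A.IsHermitian) (hB : B.IsHermitian) (g : ℝ → ℝ) :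
    (Matrix.trace (A * IsHermitian.applyFun hB g)).re
      = ∑ i, ∑ j, hA.eigenvalues i * g (hB.eigenvalues j) *
          ‖(star (hB.eigenvectorUnitary : Matrix (Fin n) (Fin n) ℂ) *
             (hA.eigenvectorUnitary : Matrix (Fin n) (Fin n) ℂ)) j i‖^2 := by
  set U : Matrix (Fin n) (Fin n) ℂ := (hA.eigenvectorUnitary : Matrix (Fin n) (Fin n) ℂ) with hU
  set V : Matrix (Fin n) (Fin n) ℂ := (hB.eigenvectorUnitary : Matrix (Fin n) (Fin n) ℂ) with hV
  set M : Matrix (Fin n) (Fin n) ℂ := star V * U with hM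
  set d : Fin n → ℂ := fun i => (hA.eigenvalues i : ℂ) with hd
  set e : Fin n → ℂ := fun j => (g (hB.eigenvalues j) : ℂ) with he
  have hstep : A * IsHermitian.applyFun hB g
      = U * (Matrix.diagonal d * (star M * (Matrix.diagonal e * star V))) := by
    conv_lhs => rw [hA.spectral_theorem]
    simp only [IsHermitian.applyFun, hM, Matrix.star_mul, star_star, ← hU, ← hV, hd, he]
    simp only [Matrix.mul_assoc, Function.comp_def]
    rw [Unitary.conjStarAlgAut_apply]
    simp only [Matrix.mul_assoc]
    rfl
  have htr : Matrix.trace (A * IsHermitian.applyFun hB g)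
      = Matrix.trace (Matrix.diagonal d * (star M * (Matrix.diagonal e * M))) := by
    rw [hstep, Matrix.trace_mul_comm]
    simp only [Matrix.mul_assoc]
    rfl
  have hterm : Matrix.trace (Matrix.diagonal d * (star M * (Matrix.diagonal e * M)))
      = ∑ i, ∑ j, ((hA.eigenvalues i * g (hB.eigenvalues j) * ‖M j i‖^2 : ℝ) : ℂ) := by
    rw [Matrix.trace]
    simp only [Matrix.diag_apply, Matrix.mul_apply, Matrix.diagonal_apply, Matrix.star_apply,
      ite_mul, mul_ite, zero_mul, mul_zero, Finset.sum_ite_eq, Finset.mem_univ, if_true,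
      Finset.mul_sum]
    refine Finset.sum_congr rfl fun i _ => ?_
    rw [Finset.sum_comm]
    simp only [Finset.sum_ite_eq, Finset.mem_univ, if_true]
    refine Finset.sum_congr rfl fun j _ => ?_
    have hz : star (M j i) * (e j * M j i) = e j * ((‖M j i‖^2 : ℝ) : ℂ) := by
      rw [mul_comm (star (M j i)), mul_assoc, Complex.star_def, RCLike.mul_conj]
      norm_cast
    rw [hz, hd, he]
    push_cast
    ring
  rw [htr, hterm]
  simp only [Complex.re_sum, Complex.ofReal_re]

/-- For convex `C¹` functions `f` and Hermitian matrices `B`, `X`: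
`Tr f(B+X) − Tr f(B) − Tr(X·f′(B)) ≥ 0`, where `Tr f(A) = ∑ᵢ f(λᵢ(A))`. -/
theorem trace_convexity_ineq {n : ℕ} (f : ℝ → ℝ)
    (hconv : ConvexOn ℝ Set.univ f) (hf : ContDiff ℝ 1 f)
    (B X : Matrix (Fin n) (Fin n) ℂ) (hB : B.IsHermitian) (hX : X.IsHermitian)
    (hBX : (B + X).IsHermitian) :
    0 ≤ (∑ i, f (hBX.eigenvalues i)) - (∑ i, f (hB.eigenvalues i))
        - (Matrix.trace (X * IsHermitian.applyFun hB (deriv f))).re := by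
  have hd : Differentiable ℝ f := hf.differentiable one_ne_zero
  set U : Matrix (Fin n) (Fin n) ℂ := (hBX.eigenvectorUnitary : Matrix (Fin n) (Fin n) ℂ) with hU
  set V : Matrix (Fin n) (Fin n) ℂ := (hB.eigenvectorUnitary : Matrix (Fin n) (Fin n) ℂ) with hV
  set M : Matrix (Fin n) (Fin n) ℂ := star V * U with hM
  set lam : Fin n → ℝ := hBX.eigenvalues with hlam
  set mu : Fin n → ℝ := hB.eigenvalues with hmu
  set c : Fin n → Fin n → ℝ := fun i j => ‖M j i‖^2 with hc
  -- unitarity of M and the row/column sums of c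
  have hMem : M ∈ Matrix.unitaryGroup (Fin n) ℂ := by
    have h := (star hB.eigenvectorUnitary * hBX.eigenvectorUnitary).prop
    simpa [Unitary.coe_star] using h
  have h1 : M * star M = 1 := Matrix.mem_unitaryGroup_iff.mp hMem
  have h2 : star M * M = 1 := Matrix.mem_unitaryGroup_iff'.mp hMem
  have hrow : ∀ i, ∑ j, c i j = 1 := by
    intro i
    have hcI : ((∑ j, c i j : ℝ) : ℂ) = 1 := by
      push_cast
      calc ∑ j, ((‖M j i‖^2 : ℝ) : ℂ)
          = ∑ j, star (M j i) * M j i := by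
            refine Finset.sum_congr rfl fun j _ => ?_
            rw [Complex.star_def, RCLike.conj_mul]; norm_cast
        _ = (star M * M) i i := by
            rw [Matrix.mul_apply]
            exact Finset.sum_congr rfl fun j _ => by rw [Matrix.star_apply]
        _ = 1 := by rw [h2, Matrix.one_apply_eq]
    exact_mod_cast hcI
  have hcol : ∀ j, ∑ i, c i j = 1 := by
    intro j
    have hcI : ((∑ i, c i j : ℝ) : ℂ) = 1 := by
      push_cast
      calc ∑ i, ((‖M j i‖^2 : ℝ) : ℂ)
          = ∑ i, M j i * star (M j i) := by
            refine Finset.sum_congr rfl fun i _ => ?_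
            rw [Complex.star_def, RCLike.mul_conj]; norm_cast
        _ = (M * star M) j j := by
            rw [Matrix.mul_apply]
            exact Finset.sum_congr rfl fun i _ => by rw [Matrix.star_apply]
        _ = 1 := by rw [h1, Matrix.one_apply_eq]
    exact_mod_cast hcI
  -- the trace terms
  have hsplit : (Matrix.trace (X * IsHermitian.applyFun hB (deriv f))).re
      = (Matrix.trace ((B + X) * IsHermitian.applyFun hB (deriv f))).re
        - (Matrix.trace (B * IsHermitian.applyFun hB (deriv f))).re := by
    rw [Matrix.add_mul, Matrix.trace_add, Complex.add_re]
    ring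
  have hA_tr : (Matrix.trace ((B + X) * IsHermitian.applyFun hB (deriv f))).re
      = ∑ i, ∑ j, lam i * deriv f (mu j) * c i j := my_trace_applyFun_re hBX hB (deriv f)
  have hB_tr : (Matrix.trace (B * IsHermitian.applyFun hB (deriv f))).re
      = ∑ j, mu j * deriv f (mu j) := by
    rw [my_trace_applyFun_re hB hB (deriv f)]
    have hVV : star V * V = 1 := hB.eigenvectorUnitary.prop.1
    rw [← hV, hVV]
    simp only [← hmu]
    have hterm : ∀ i j : Fin n, mu i * deriv f (mu j) * ‖(1 : Matrix (Fin n) (Fin n) ℂ) j i‖^2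
        = if j = i then mu i * deriv f (mu i) else 0 := by
      intro i j
      by_cases h : j = i
      · subst h; simp [Matrix.one_apply_eq]
      · simp [Matrix.one_apply_ne h, h]
    simp only [hterm, Finset.sum_ite_eq', Finset.mem_univ, if_true]
  -- rewrite the single sums as double sums weighted by c
  have e1 : ∑ i, f (lam i) = ∑ i, ∑ j, c i j * f (lam i) := by
    refine Finset.sum_congr rfl fun i _ => ?_
    rw [← Finset.sum_mul, hrow i, one_mul]
  have e2 : ∑ j, f (mu j) = ∑ i, ∑ j, c i j * f (mu j) := by
    rw [Finset.sum_comm]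
    refine Finset.sum_congr rfl fun j _ => ?_
    rw [← Finset.sum_mul, hcol j, one_mul]
  have e3 : ∑ j, mu j * deriv f (mu j) = ∑ i, ∑ j, c i j * (mu j * deriv f (mu j)) := by
    rw [Finset.sum_comm]
    refine Finset.sum_congr rfl fun j _ => ?_
    rw [← Finset.sum_mul, hcol j, one_mul]
  have key : (∑ i, f (lam i)) - (∑ i, f (mu i))
        - (Matrix.trace (X * IsHermitian.applyFun hB (deriv f))).re
      = ∑ i, ∑ j, c i j * (f (lam i) - f (mu j) - deriv f (mu j) * (lam i - mu j)) := by
    rw [hsplit, hA_tr, hB_tr, e1, e2, e3]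
    rw [← Finset.sum_sub_distrib, ← Finset.sum_sub_distrib, ← Finset.sum_sub_distrib]
    refine Finset.sum_congr rfl fun i _ => ?_
    rw [← Finset.sum_sub_distrib, ← Finset.sum_sub_distrib, ← Finset.sum_sub_distrib]
    refine Finset.sum_congr rfl fun j _ => ?_
    ring
  rw [key]
  refine Finset.sum_nonneg fun i _ => Finset.sum_nonneg fun j _ => ?_
  have hcnn : 0 ≤ c i j := by positivity
  have hgrad := my_grad_ineq hconv hd (lam i) (mu j)
  nlinarith [mul_le_mul_of_nonneg_left hgrad hcnn]
end

section
/- (Koplienko trace formula, finite-dimensional case.) Let A, B be n×n Hermitian complex matrices, X = A − B, let (ψ_k)_{k=1}^n be an orthonormal basis of ℂⁿ with Bψ_k = b_k ψ_k (b_k ∈ ℝ), and let a_1,…,a_n be the eigenvalues of A counted with multiplicity. Define η : ℝ → ℝ by η(λ) = ∑_{k : b_k < λ} ⟨ψ_k, Xψ_k⟩ − ∑_{j=1}^n [ (λ − b_j)₊ − (λ − a_j)₊ ]. Then η(λ) = 0 whenever λ ≤ min or λ > max of all eigenvalues of A and B, and for every twice continuously differentiable f : ℝ → ℝ, Tr f(A)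 − Tr f(B) − Tr(X · f′(B)) = ∫_ℝ f″(λ) η(λ) dλ. -/
open Matrix

section Helpers

/-- Trace computed in an orthonormal basis. -/
lemma koplienko_trace_onb {n : ℕ} (ψ : Fin n → (Fin n → ℂ))
    (hortho : ∀ k l, star (ψ k) ⬝ᵥ ψ l = if k = l then (1 : ℂ) else 0)
    (M : Matrix (Fin n) (Fin n) ℂ) :
    Matrix.trace M = ∑ k, star (ψ k) ⬝ᵥ (M *ᵥ ψ k) := by
  classical
  set P : Matrix (Fin n) (Fin n) ℂ := Matrix.of fun i k => ψ k i with hP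
  have hPs : star P * P = 1 := by
    ext k l
    have := hortho k l
    simp only [dotProduct, Pi.star_apply] at this
    simp only [Matrix.mul_apply, Matrix.one_apply, hP, Matrix.star_apply, Matrix.of_apply]
    rw [← this]
  have hPP : P * star P = 1 := mul_eq_one_comm.mp hPs
  calc Matrix.trace M = Matrix.trace (M * (P * star P)) := by rw [hPP, mul_one]
    _ = Matrix.trace (star P * (M * P)) := by
        rw [show M * (P * star P) = (M * P) * star P by rw [mul_assoc], Matrix.trace_mul_comm]
    _ = ∑ k, star (ψ k) ⬝ᵥ (M *ᵥ ψ k) := by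
        rw [Matrix.trace]
        refine Finset.sum_congr rfl fun k _ => ?_
        simp only [Matrix.diag, Matrix.mul_apply, dotProduct, Matrix.mulVec,
          Matrix.star_apply, hP, Matrix.of_apply, Finset.mul_sum, Pi.star_apply]

/-- Applying a function to a Hermitian matrix preserves eigenvectors. -/
lemma koplienko_applyFun_mulVec {n : ℕ} {B : Matrix (Fin n) (Fin n) ℂ} (hB : B.IsHermitian)
    (g : ℝ → ℝ) (v : Fin n → ℂ) (c : ℝ) (hv : B *ᵥ v = (c : ℂ) • v) :
    IsHermitian.applyFun hB g *ᵥ v = (g c : ℂ) • v := by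
  set U : Matrix (Fin n) (Fin n) ℂ := (hB.eigenvectorUnitary : Matrix (Fin n) (Fin n) ℂ)
  have hU : star U * U = 1 := Matrix.mem_unitaryGroup_iff'.mp hB.eigenvectorUnitary.2
  have hU' : U * star U = 1 := Matrix.mem_unitaryGroup_iff.mp hB.eigenvectorUnitary.2
  set w : Fin n → ℂ := star U *ᵥ v with hw
  have hDw : ∀ i, (hB.eigenvalues i : ℂ) * w i = (c : ℂ) * w i := by
    intro i
    have h2 : star U * B = Matrix.diagonal (fun i => (hB.eigenvalues i : ℂ)) * star U := by
      conv_lhs => rw [hB.spectral_theorem, Unitary.conjStarAlgAut_apply]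
      rw [← mul_assoc, ← mul_assoc, hU, one_mul]
      rfl
    have h1 : (star U * B) *ᵥ v = (c : ℂ) • w := by
      rw [← Matrix.mulVec_mulVec, hv, Matrix.mulVec_smul]
    rw [h2, ← Matrix.mulVec_mulVec, ← hw] at h1
    have := congrFun h1 i
    simpa [Matrix.mulVec_diagonal] using this
  have key : ∀ i, (g (hB.eigenvalues i) : ℂ) * w i = (g c : ℂ) * w i := by
    intro i
    rcases eq_or_ne (w i) 0 with h | h
    · simp [h]
    · have : (hB.eigenvalues i : ℂ) = (c : ℂ) := by
        have := mul_right_cancel₀ h (hDw i)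
        exact this
      have : hB.eigenvalues i = c := by exact_mod_cast this
      rw [this]
  have h3 : IsHermitian.applyFun hB g *ᵥ v
      = U *ᵥ (Matrix.diagonal (fun i => (g (hB.eigenvalues i) : ℂ)) *ᵥ w) := by
    rw [IsHermitian.applyFun, hw, Matrix.mulVec_mulVec, Matrix.mulVec_mulVec]
  rw [h3]
  have h4 : Matrix.diagonal (fun i => (g (hB.eigenvalues i) : ℂ)) *ᵥ w = (g c : ℂ) • w := by
    funext i
    simp [Matrix.mulVec_diagonal, key i]
  rw [h4, Matrix.mulVec_smul, hw, Matrix.mulVec_mulVec, hU', Matrix.one_mulVec]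

/-- The trace of a Hermitian matrix is the sum of its eigenvalues. -/
lemma koplienko_trace_eq_sum_eigenvalues {n : ℕ} {A : Matrix (Fin n) (Fin n) ℂ}
    (hA : A.IsHermitian) : Matrix.trace A = ∑ j, (hA.eigenvalues j : ℂ) := by
  conv_lhs => rw [hA.spectral_theorem, Unitary.conjStarAlgAut_apply]
  rw [Matrix.trace_mul_comm, ← mul_assoc,
    Matrix.mem_unitaryGroup_iff'.mp hA.eigenvectorUnitary.2, one_mul, Matrix.trace_diagonal]
  rfl

/-- A Hermitian quadratic form is real. -/
lemma koplienko_herm_re {n : ℕ} {X : Matrix (Fin n) (Fin n) ℂ} (hX : X.IsHermitian)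
    (v : Fin n → ℂ) : star v ⬝ᵥ (X *ᵥ v) = (((star v ⬝ᵥ (X *ᵥ v)) : ℂ).re : ℂ) := by
  have h : star (star v ⬝ᵥ (X *ᵥ v)) = star v ⬝ᵥ (X *ᵥ v) := by
    conv_lhs => rw [Matrix.star_dotProduct, Matrix.star_mulVec, star_star, hX.eq,
      ← Matrix.dotProduct_mulVec]
  exact (Complex.conj_eq_iff_re.mp h).symm

/-- Integration by parts for `f''(x)(x-c)` on an interval. -/
lemma koplienko_parts (f : ℝ → ℝ) (hf : ContDiff ℝ 2 f) (c M : ℝ) :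
    ∫ x in c..M, deriv (deriv f) x * (x - c)
      = deriv f M * (M - c) - f M + f c := by
  have hdf : Differentiable ℝ f := hf.differentiable (by norm_num)
  have hf1 : ContDiff ℝ 1 (deriv f) := by
    rw [show (2 : WithTop ℕ∞) = 1 + 1 from rfl, contDiff_succ_iff_deriv] at hf
    exact hf.2.2
  have hd1 : Differentiable ℝ (deriv f) := hf1.differentiable one_ne_zero
  have hc2 : Continuous (deriv (deriv f)) := (contDiff_one_iff_deriv.mp hf1).2
  have key : ∀ x ∈ Set.uIcc c M, HasDerivAt (fun x => deriv f x * (x - c) - f x)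
      (deriv (deriv f) x * (x - c)) x := by
    intro x _
    have h1 : HasDerivAt (fun x => deriv f x * (x - c))
        (deriv (deriv f) x * (x - c) + deriv f x * 1) x :=
      ((hd1 x).hasDerivAt).mul ((hasDerivAt_id x).sub_const c)
    have h2 : HasDerivAt (fun x => deriv f x * (x - c) - f x)
        (deriv (deriv f) x * (x - c) + deriv f x * 1 - deriv f x) x := h1.sub (hdf x).hasDerivAt
    convert h2 using 1
    ring
  have := intervalIntegral.integral_eq_sub_of_hasDerivAt key
    (((hc2.mul (by continuity)).intervalIntegrable c M))
  rw [this]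
  ring

/-- Fundamental theorem of calculus for `f''` on an interval. -/
lemma koplienko_ftc (f : ℝ → ℝ) (hf : ContDiff ℝ 2 f) (c M : ℝ) :
    ∫ x in c..M, deriv (deriv f) x = deriv f M - deriv f c := by
  have hf1 : ContDiff ℝ 1 (deriv f) := by
    rw [show (2 : WithTop ℕ∞) = 1 + 1 from rfl, contDiff_succ_iff_deriv] at hf
    exact hf.2.2
  apply intervalIntegral.integral_deriv_eq_sub
  · intro x _
    exact hf1.differentiable one_ne_zero x
  · exact (contDiff_one_iff_deriv.mp hf1).2.intervalIntegrable c M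

/-- Indicator integral over `Set.Ioc`. -/
lemma koplienko_ind_int (g : ℝ → ℝ) (m c M : ℝ) (h1 : m ≤ c) (h2 : c ≤ M) :
    ∫ x in Set.Ioc m M, Set.indicator (Set.Ioi c) g x = ∫ x in c..M, g x := by
  rw [MeasureTheory.setIntegral_indicator measurableSet_Ioi, Set.Ioc_inter_Ioi,
    max_eq_right h1, intervalIntegral.integral_of_le h2]

end Helpers

/-- **Koplienko trace formula, finite-dimensional case.** With `X = A − B`,
`(ψ_k)` an orthonormal eigenbasis of `B` with eigenvalues `b_k`, and `a_j` the
eigenvalues of `A`, the Koplienko spectral shift function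
`η(λ) = ∑_{k : b_k < λ} ⟨ψ_k, Xψ_k⟩ − ∑_j [(λ−b_j)₊ − (λ−a_j)₊]` vanishes outside
the convex hull of the spectra and satisfies
`Tr f(A) − Tr f(B) − Tr(X·f′(B)) = ∫ f″(λ) η(λ) dλ` for all `C²` functions `f`. -/
theorem koplienko_trace_formula_finiteDim {n : ℕ} (A B : Matrix (Fin n) (Fin n) ℂ)
    (hA : A.IsHermitian) (hB : B.IsHermitian)
    (X : Matrix (Fin n) (Fin n) ℂ) (hX : X = A - B)
    (ψ : Fin n → (Fin n → ℂ)) (b : Fin n → ℝ)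
    (hortho : ∀ k l, star (ψ k) ⬝ᵥ ψ l = if k = l then (1 : ℂ) else 0)
    (heig : ∀ k, B *ᵥ ψ k = (b k : ℂ) • ψ k)
    (η : ℝ → ℝ)
    (hη : ∀ x : ℝ,
      η x = (∑ k ∈ Finset.univ.filter fun k => b k < x, (star (ψ k) ⬝ᵥ (X *ᵥ ψ k)).re)
          - ∑ j, (max (x - b j) 0 - max (x - hA.eigenvalues j) 0)) :
    (∀ x : ℝ, (∀ j, x ≤ hA.eigenvalues j) → (∀ k, x ≤ b k) → η x = 0) ∧
    (∀ x : ℝ, (∀ j, hA.eigenvalues j < x) → (∀ k, b k < x) → η x = 0) ∧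
    (∀ f : ℝ → ℝ, ContDiff ℝ 2 f →
      ((∑ j, f (hA.eigenvalues j) : ℝ) : ℂ) - ((∑ k, f (b k) : ℝ) : ℂ)
          - Matrix.trace (X * IsHermitian.applyFun hB (deriv f))
        = ((∫ x : ℝ, deriv (deriv f) x * η x : ℝ) : ℂ)) := by
  classical
  have hXherm : X.IsHermitian := hX ▸ hA.sub hB
  set xk : Fin n → ℝ := fun k => (star (ψ k) ⬝ᵥ (X *ᵥ ψ k)).re with hxk
  have hreal : ∀ k, star (ψ k) ⬝ᵥ (X *ᵥ ψ k) = ((xk k : ℝ) : ℂ) := fun k =>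
    koplienko_herm_re hXherm (ψ k)
  -- trace of B in the basis ψ
  have htrB : Matrix.trace B = ∑ k, ((b k : ℝ) : ℂ) := by
    rw [koplienko_trace_onb ψ hortho B]
    refine Finset.sum_congr rfl fun k _ => ?_
    rw [heig k, dotProduct_smul, hortho k k]
    simp
  have htrA : Matrix.trace A = ∑ j, ((hA.eigenvalues j : ℝ) : ℂ) :=
    koplienko_trace_eq_sum_eigenvalues hA
  have htrX : Matrix.trace X = ∑ k, ((xk k : ℝ) : ℂ) := by
    rw [koplienko_trace_onb ψ hortho X]
    exact Finset.sum_congr rfl fun k _ => hreal k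
  have hsum : ∑ k, xk k = ∑ j, hA.eigenvalues j - ∑ k, b k := by
    have h1 : Matrix.trace X = Matrix.trace A - Matrix.trace B := by
      rw [hX, Matrix.trace_sub]
    rw [htrX, htrA, htrB] at h1
    have := congrArg Complex.re h1
    simpa using this
  -- Part 1
  have P1 : ∀ x : ℝ, (∀ j, x ≤ hA.eigenvalues j) → (∀ k, x ≤ b k) → η x = 0 := by
    intro x ha hb
    rw [hη x]
    have hfilt : (Finset.univ.filter fun k => b k < x) = ∅ :=
      Finset.filter_eq_empty_iff.mpr (fun k _ => not_lt.mpr (hb k))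
    rw [hfilt]
    have : ∀ j, max (x - b j) 0 - max (x - hA.eigenvalues j) 0 = 0 := by
      intro j
      rw [max_eq_right (sub_nonpos.mpr (hb j)), max_eq_right (sub_nonpos.mpr (ha j))]
      ring
    simp [this]
  -- Part 2
  have P2 : ∀ x : ℝ, (∀ j, hA.eigenvalues j < x) → (∀ k, b k < x) → η x = 0 := by
    intro x ha hb
    rw [hη x]
    have hfilt : (Finset.univ.filter fun k => b k < x) = Finset.univ :=
      Finset.filter_true_of_mem (fun k _ => hb k)
    rw [hfilt]
    have h2 : ∀ j ∈ Finset.univ, max (x - b j) 0 - max (x - hA.eigenvalues j) 0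
        = hA.eigenvalues j - b j := by
      intro j _
      rw [max_eq_left (sub_nonneg.mpr (hb j).le), max_eq_left (sub_nonneg.mpr (ha j).le)]
      ring
    rw [Finset.sum_congr rfl h2, Finset.sum_sub_distrib]
    rw [show (∑ k, xk k) = ∑ j, hA.eigenvalues j - ∑ k, b k from hsum]
    ring
  refine ⟨P1, P2, ?_⟩
  intro f hf
  -- the trace term
  have htrterm : Matrix.trace (X * IsHermitian.applyFun hB (deriv f))
      = ((∑ k, deriv f (b k) * xk k : ℝ) : ℂ) := by
    rw [koplienko_trace_onb ψ hortho]
    push_cast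
    refine Finset.sum_congr rfl fun k _ => ?_
    rw [← Matrix.mulVec_mulVec, koplienko_applyFun_mulVec hB (deriv f) (ψ k) (b k) (heig k),
      Matrix.mulVec_smul, dotProduct_smul, hreal k, smul_eq_mul]
  rw [htrterm]
  rw [show ((∑ j, f (hA.eigenvalues j) : ℝ) : ℂ) - ((∑ k, f (b k) : ℝ) : ℂ)
      - ((∑ k, deriv f (b k) * xk k : ℝ) : ℂ)
      = (((∑ j, f (hA.eigenvalues j)) - (∑ k, f (b k)) - ∑ k, deriv f (b k) * xk k : ℝ) : ℂ) by
    push_cast; ring]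
  congr 1
  -- now a real identity
  rcases Nat.eq_zero_or_pos n with hn | hn
  · subst hn
    simp [hη]
  -- choose an interval [m, M] containing all eigenvalues
  have hne : Nonempty (Fin n) := ⟨⟨0, hn⟩⟩
  set T : Finset ℝ := Finset.image hA.eigenvalues Finset.univ ∪ Finset.image b Finset.univ
    with hT
  have hTne : T.Nonempty := by
    refine ⟨hA.eigenvalues (Classical.arbitrary (Fin n)), ?_⟩
    simp [hT]
  set m := T.min' hTne with hm
  set M := T.max' hTne with hM
  have hma : ∀ j, m ≤ hA.eigenvalues j := fun j => Finset.min'_le _ _ (by simp [hT])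
  have hmb : ∀ k, m ≤ b k := fun k => Finset.min'_le _ _ (by simp [hT])
  have hMa : ∀ j, hA.eigenvalues j ≤ M := fun j => Finset.le_max' _ _ (by simp [hT])
  have hMb : ∀ k, b k ≤ M := fun k => Finset.le_max' _ _ (by simp [hT])
  have hmM : m ≤ M := le_trans (hma (Classical.arbitrary (Fin n)))
    (hMa (Classical.arbitrary (Fin n)))
  -- η vanishes outside (m, M]
  have hη0 : ∀ x, x ∉ Set.Ioc m M → η x = 0 := by
    intro x hx
    rw [Set.mem_Ioc, not_and_or, not_lt, not_le] at hx
    rcases hx with hx | hx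
    · exact P1 x (fun j => le_trans hx (hma j)) (fun k => le_trans hx (hmb k))
    · exact P2 x (fun j => lt_of_le_of_lt (hMa j) hx) (fun k => lt_of_le_of_lt (hMb k) hx)
  -- derivative facts
  have hf1 : ContDiff ℝ 1 (deriv f) := by
    have hf' := hf
    rw [show (2 : WithTop ℕ∞) = 1 + 1 from rfl, contDiff_succ_iff_deriv] at hf'
    exact hf'.2.2
  have hc2 : Continuous (deriv (deriv f)) := (contDiff_one_iff_deriv.mp hf1).2
  -- reduce the integral to the interval
  have hind : (fun x => deriv (deriv f) x * η x)
      = (Set.Ioc m M).indicator (fun x => deriv (deriv f) x * η x) := by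
    funext x
    by_cases hx : x ∈ Set.Ioc m M
    · rw [Set.indicator_of_mem hx]
    · rw [Set.indicator_of_notMem hx, hη0 x hx, mul_zero]
  rw [show (∫ x : ℝ, deriv (deriv f) x * η x)
      = ∫ x in Set.Ioc m M, deriv (deriv f) x * η x by
    conv_lhs => rw [hind]
    rw [MeasureTheory.integral_indicator measurableSet_Ioc]]
  -- pointwise decomposition of the integrand
  have hmax : ∀ (c x : ℝ), deriv (deriv f) x * max (x - c) 0
      = Set.indicator (Set.Ioi c) (fun y => deriv (deriv f) y * (y - c)) x := by
    intro c x
    by_cases h : c < x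
    · rw [Set.indicator_of_mem (Set.mem_Ioi.mpr h), max_eq_left (by linarith)]
    · rw [Set.indicator_of_notMem (by simpa using h),
        max_eq_right (by push_neg at h; linarith), mul_zero]
  have hpt : ∀ x, deriv (deriv f) x * η x
      = (∑ k, xk k * Set.indicator (Set.Ioi (b k)) (deriv (deriv f)) x)
        - ∑ j, (Set.indicator (Set.Ioi (b j))
              (fun y => deriv (deriv f) y * (y - b j)) x
            - Set.indicator (Set.Ioi (hA.eigenvalues j))
              (fun y => deriv (deriv f) y * (y - hA.eigenvalues j)) x) := by
    intro x
    rw [hη x, Finset.sum_filter, mul_sub, Finset.mul_sum, Finset.mul_sum]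
    congr 1
    · refine Finset.sum_congr rfl fun k _ => ?_
      by_cases h : b k < x
      · rw [if_pos h, Set.indicator_of_mem (Set.mem_Ioi.mpr h)]
        ring
      · rw [if_neg h, Set.indicator_of_notMem (by simpa using h), mul_zero, mul_zero]
    · refine Finset.sum_congr rfl fun j _ => ?_
      rw [mul_sub, hmax (b j) x, hmax (hA.eigenvalues j) x]
  rw [show (∫ x in Set.Ioc m M, deriv (deriv f) x * η x)
      = ∫ x in Set.Ioc m M,
          ((∑ k, xk k * Set.indicator (Set.Ioi (b k)) (deriv (deriv f)) x)
            - ∑ j, (Set.indicator (Set.Ioi (b j))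
                  (fun y => deriv (deriv f) y * (y - b j)) x
                - Set.indicator (Set.Ioi (hA.eigenvalues j))
                  (fun y => deriv (deriv f) y * (y - hA.eigenvalues j)) x)) from
    MeasureTheory.integral_congr_ae (MeasureTheory.ae_of_all _ hpt)]
  -- integrability of the pieces
  have hi1 : ∀ c : ℝ, MeasureTheory.IntegrableOn
      (Set.indicator (Set.Ioi c) (deriv (deriv f))) (Set.Ioc m M) := fun c =>
    (hc2.integrableOn_Ioc).indicator measurableSet_Ioi
  have hi2 : ∀ c : ℝ, MeasureTheory.IntegrableOn
      (Set.indicator (Set.Ioi c) (fun y => deriv (deriv f) y * (y - c))) (Set.Ioc m M) :=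
    fun c => ((hc2.mul (continuous_id.sub continuous_const)).integrableOn_Ioc).indicator
      measurableSet_Ioi
  have hi0 : ∀ k : Fin n, MeasureTheory.IntegrableOn
      (fun x => xk k * Set.indicator (Set.Ioi (b k)) (deriv (deriv f)) x)
      (Set.Ioc m M) := fun k => (hi1 (b k)).const_mul (xk k)
  have hi3 : ∀ j : Fin n, MeasureTheory.IntegrableOn
      (fun x => Set.indicator (Set.Ioi (b j))
          (fun y => deriv (deriv f) y * (y - b j)) x
        - Set.indicator (Set.Ioi (hA.eigenvalues j))
          (fun y => deriv (deriv f) y * (y - hA.eigenvalues j)) x)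
      (Set.Ioc m M) := fun j => (hi2 (b j)).sub (hi2 (hA.eigenvalues j))
  rw [MeasureTheory.integral_sub
      (MeasureTheory.integrable_finset_sum (f := fun k x =>
          xk k * Set.indicator (Set.Ioi (b k)) (deriv (deriv f)) x)
        Finset.univ (fun k _ => hi0 k))
      (MeasureTheory.integrable_finset_sum (f := fun j x =>
          Set.indicator (Set.Ioi (b j)) (fun y => deriv (deriv f) y * (y - b j)) x
            - Set.indicator (Set.Ioi (hA.eigenvalues j))
              (fun y => deriv (deriv f) y * (y - hA.eigenvalues j)) x)
        Finset.univ (fun j _ => hi3 j)),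
    MeasureTheory.integral_finset_sum Finset.univ (fun k _ => hi0 k),
    MeasureTheory.integral_finset_sum Finset.univ (fun j _ => hi3 j)]
  -- compute each piece
  have J1 : ∀ c : ℝ, m ≤ c → c ≤ M →
      (∫ x in Set.Ioc m M, Set.indicator (Set.Ioi c) (deriv (deriv f)) x)
        = deriv f M - deriv f c := fun c h1 h2 => by
    rw [koplienko_ind_int _ m c M h1 h2, koplienko_ftc f hf c M]
  have J2 : ∀ c : ℝ, m ≤ c → c ≤ M →
      (∫ x in Set.Ioc m M,
          Set.indicator (Set.Ioi c) (fun y => deriv (deriv f) y * (y - c)) x)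
        = deriv f M * (M - c) - f M + f c := fun c h1 h2 => by
    rw [koplienko_ind_int _ m c M h1 h2, koplienko_parts f hf c M]
  have e1 : ∀ k ∈ Finset.univ, (∫ x in Set.Ioc m M,
      xk k * Set.indicator (Set.Ioi (b k)) (deriv (deriv f)) x)
        = xk k * (deriv f M - deriv f (b k)) := by
    intro k _
    rw [MeasureTheory.integral_const_mul, J1 (b k) (hmb k) (hMb k)]
  have e2 : ∀ j ∈ Finset.univ, (∫ x in Set.Ioc m M,
      (Set.indicator (Set.Ioi (b j)) (fun y => deriv (deriv f) y * (y - b j)) x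
        - Set.indicator (Set.Ioi (hA.eigenvalues j))
            (fun y => deriv (deriv f) y * (y - hA.eigenvalues j)) x))
        = deriv f M * (hA.eigenvalues j - b j) + f (b j) - f (hA.eigenvalues j) := by
    intro j _
    rw [MeasureTheory.integral_sub (hi2 (b j)) (hi2 (hA.eigenvalues j)),
      J2 (b j) (hmb j) (hMb j), J2 (hA.eigenvalues j) (hma j) (hMa j)]
    ring
  rw [Finset.sum_congr rfl e1, Finset.sum_congr rfl e2]
  have E1 : ∑ k, xk k * (deriv f M - deriv f (b k))
      = (∑ k, xk k) * deriv f M - ∑ k, deriv f (b k) * xk k := by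
    rw [Finset.sum_mul, ← Finset.sum_sub_distrib]
    exact Finset.sum_congr rfl fun k _ => by ring
  have E2 : ∑ j, (deriv f M * (hA.eigenvalues j - b j) + f (b j) - f (hA.eigenvalues j))
      = deriv f M * ((∑ j, hA.eigenvalues j) - ∑ k, b k) + (∑ k, f (b k))
        - ∑ j, f (hA.eigenvalues j) := by
    rw [Finset.sum_sub_distrib, Finset.sum_add_distrib, ← Finset.mul_sum,
      Finset.sum_sub_distrib]
  rw [E1, E2, hsum]
  ring
end
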